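/- Let (G, v₁, v₂, p₁, …, p_k) be a watermelon graph with G finite. Then G is 2-colorable if and only if all the path lengths have the same parity, i.e., for all indices i and j, length(p_i) ≡ length(p_j) (mod 2). -/

import Mathlib

open SimpleGraph Walk

section Aux

variable {V : Type*} {G : SimpleGraph V} [DecidableEq V]

lemma takeUntil_start {a b : V} (w : G.Walk a b) (h : a ∈ w.support) :
    w.takeUntil a h = SimpleGraph.Walk.nil := by
  cases w with
  | nil => rfl
  | cons r q => simp [SimpleGraph.Walk.takeUntil]

lemma takeUntil_cons' {a c b u : V} (r : G.Adj a c) (q : G.Walk c b)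
    (h : u ∈ (SimpleGraph.Walk.cons r q).support) (hne : a ≠ u) (hu : u ∈ q.support) :
    (SimpleGraph.Walk.cons r q).takeUntil u h
      = SimpleGraph.Walk.cons r (q.takeUntil u hu) := by
  simp [SimpleGraph.Walk.takeUntil, hne]

lemma length_takeUntil_end {a b : V} {w : G.Walk a b} (hw : w.IsPath) (h : b ∈ w.support) :
    (w.takeUntil b h).length = w.length := by
  have hspec := SimpleGraph.Walk.take_spec w h
  have hnil : w.dropUntil b h = SimpleGraph.Walk.nil :=
    SimpleGraph.Walk.isPath_iff_eq_nil.mp (hw.dropUntil h)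
  calc (w.takeUntil b h).length
      = (w.takeUntil b h).length + (w.dropUntil b h).length := by rw [hnil]; rfl
    _ = ((w.takeUntil b h).append (w.dropUntil b h)).length :=
        (SimpleGraph.Walk.length_append _ _).symm
    _ = w.length := by rw [hspec]

lemma parity_takeUntil_ne {a b : V} {w : G.Walk a b} (hw : w.IsPath) {u v : V}
    (he : s(u, v) ∈ w.edges) (hu : u ∈ w.support) (hv : v ∈ w.support) :
    (w.takeUntil u hu).length % 2 ≠ (w.takeUntil v hv).length % 2 := by
  induction w with
  | nil => simp at he
  | @cons a c b r q ih =>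
    rw [SimpleGraph.Walk.edges_cons, List.mem_cons] at he
    rw [SimpleGraph.Walk.cons_isPath_iff] at hw
    obtain ⟨hq, hna⟩ := hw
    have hac : a ≠ c := r.ne
    rcases he with he | he
    · -- the edge is the first edge
      have hcq : c ∈ q.support := SimpleGraph.Walk.start_mem_support q
      rcases Sym2.eq_iff.mp he with ⟨rfl, rfl⟩ | ⟨rfl, rfl⟩
      · rw [takeUntil_start, takeUntil_cons' r q hv hac hcq, takeUntil_start]
        simp
      · rw [takeUntil_start, takeUntil_cons' r q hu (Ne.symm hac).symm hcq, takeUntil_start]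
        simp
    · -- the edge is in the tail
      have hu' : u ∈ q.support := SimpleGraph.Walk.fst_mem_support_of_mem_edges q he
      have hv' : v ∈ q.support := SimpleGraph.Walk.snd_mem_support_of_mem_edges q he
      have hau : a ≠ u := fun h => hna (h ▸ hu')
      have hav : a ≠ v := fun h => hna (h ▸ hv')
      rw [takeUntil_cons' r q hu hau hu', takeUntil_cons' r q hv hav hv']
      have := ih hq he hu' hv'
      simp only [SimpleGraph.Walk.length_cons]
      omega

omit [DecidableEq V] in
lemma parity_of_coloring (c : G.Coloring (Fin 2)) {a b : V} (w : G.Walk a b) :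
    w.length % 2 = ((c a).val + (c b).val) % 2 := by
  induction w with
  | nil => simp only [SimpleGraph.Walk.length_nil]; omega
  | @cons a d b r q ih =>
    have hne : c a ≠ c d := c.valid r
    have h1 : (c a).val ≠ (c d).val := fun h => hne (Fin.val_injective h)
    have h2 : (c a).val < 2 := (c a).isLt
    have h3 : (c d).val < 2 := (c d).isLt
    simp only [SimpleGraph.Walk.length_cons]
    omega

end Aux

/-- A watermelon graph: a simple graph `G` together with two distinct vertices `v₁, v₂`
and a nonempty family of pairwise internally disjoint paths `p i` of length at least 2
from `v₁` to `v₂` that cover all vertices and all edges of `G`. -/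
structure SimpleGraph.IsWatermelon {V : Type*} (G : SimpleGraph V) (v₁ v₂ : V) {k : ℕ}
    (p : Fin k → G.Walk v₁ v₂) : Prop where
  ne : v₁ ≠ v₂
  nonempty : 0 < k
  isPath : ∀ i, (p i).IsPath
  two_le_length : ∀ i, 2 ≤ (p i).length
  support_inter : ∀ i j, i ≠ j →
    {x | x ∈ (p i).support} ∩ {x | x ∈ (p j).support} = {v₁, v₂}
  support_cover : ∀ x : V, ∃ i, x ∈ (p i).support
  edge_cover : ∀ e ∈ G.edgeSet, ∃ i, e ∈ (p i).edges

theorem watermelon_colorable_iff_same_parity {V : Type*} [Fintype V]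
    (G : SimpleGraph V) (v₁ v₂ : V) {k : ℕ} (p : Fin k → G.Walk v₁ v₂)
    (hW : G.IsWatermelon v₁ v₂ p) :
    G.Colorable 2 ↔ ∀ i j, (p i).length % 2 = (p j).length % 2 := by
  classical
  constructor
  · rintro ⟨c⟩ i j
    rw [parity_of_coloring c (p i), parity_of_coloring c (p j)]
  · intro hpar
    -- define the coloring by position parity along the covering path
    set f : V → ZMod 2 := fun x =>
      (((p (hW.support_cover x).choose).takeUntil x
        (hW.support_cover x).choose_spec).length : ZMod 2) with hf
    have hwd : ∀ (x : V) (i : Fin k) (h : x ∈ (p i).support),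
        f x = ((((p i).takeUntil x h).length : ℕ) : ZMod 2) := by
      intro x i h
      by_cases hij : i = (hW.support_cover x).choose
      · subst hij; rfl
      · have hx : x ∈ ({v₁, v₂} : Set V) := by
          rw [← hW.support_inter i (hW.support_cover x).choose hij]
          exact ⟨h, (hW.support_cover x).choose_spec⟩
        rcases hx with rfl | rfl
        · rw [hf]
          simp only
          rw [takeUntil_start, takeUntil_start]
        · rw [hf]
          simp only
          rw [length_takeUntil_end (hW.isPath _) _, length_takeUntil_end (hW.isPath _) _]
          rw [ZMod.natCast_eq_natCast_iff]
          exact hpar _ i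
    have hvalid : ∀ {u v : V}, G.Adj u v → f u ≠ f v := by
      intro u v huv
      obtain ⟨i, he⟩ := hW.edge_cover s(u, v) huv
      have hu : u ∈ (p i).support := SimpleGraph.Walk.fst_mem_support_of_mem_edges _ he
      have hv : v ∈ (p i).support := SimpleGraph.Walk.snd_mem_support_of_mem_edges _ he
      rw [hwd u i hu, hwd v i hv]
      rw [Ne, ZMod.natCast_eq_natCast_iff]
      exact parity_takeUntil_ne (hW.isPath i) he hu hv
    have hcol : G.Coloring (ZMod 2) := SimpleGraph.Coloring.mk f fun h => hvalid h
    have := hcol.colorable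
    simpa using this
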